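/- Let 𝔤 = V₁ ⊕ ⋯ ⊕ V_s be a stratified real Lie algebra of rank m and let k ≥ 0 be an integer. Then 𝔤 is hypergenerated of order k if and only if every linear subspace P ⊆ V₁ with dim P = m − k satisfies V₂ ⊆ Lie(P). -/

import Mathlib

/-- The submodule of a Lie algebra spanned by brackets of elements of two submodules. -/
def bracketSpan {L : Type*} [LieRing L] [LieAlgebra ℝ L] (A B : Submodule ℝ L) :
    Submodule ℝ L :=
  Submodule.span ℝ {z | ∃ x ∈ A, ∃ y ∈ B, ⁅x, y⁆ = z}

/-- The commutator submodule `[𝔤, 𝔤]` of a Lie algebra. -/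
def commutatorSubmodule (L : Type*) [LieRing L] [LieAlgebra ℝ L] : Submodule ℝ L :=
  bracketSpan (⊤ : Submodule ℝ L) ⊤

/-- A family `V` of submodules of a real Lie algebra `L` is a stratification of step `s` if
`L = V 1 ⊕ ⋯ ⊕ V s`, `[V 1, V (i-1)] = V i` for `2 ≤ i ≤ s`, `V s ≠ 0` and `[V 1, V s] = 0`.
We also require `V i = 0` for `i = 0` and `i > s`. -/
structure IsStratification (L : Type*) [LieRing L] [LieAlgebra ℝ L]
    (V : ℕ → Submodule ℝ L) (s : ℕ) : Prop where
  one_le_step : 1 ≤ s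
  isInternal : DirectSum.IsInternal (fun i : Fin s => V (i.1 + 1))
  bracket_eq : ∀ i, 2 ≤ i → i ≤ s → bracketSpan (V 1) (V (i - 1)) = V i
  last_ne_bot : V s ≠ ⊥
  bracket_last_eq_bot : bracketSpan (V 1) (V s) = ⊥
  zero_eq_bot : V 0 = ⊥
  eq_bot_of_gt : ∀ i, s < i → V i = ⊥

/-- A stratified real Lie algebra with strata `V` and rank `m = dim (V 1)` is hypergenerated of
order `k` if every subspace `P ⊆ V 1` with `dim P = m - k` satisfies `[𝔤,𝔤] ⊆ Lie(P)`. -/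
def IsHypergenerated (L : Type*) [LieRing L] [LieAlgebra ℝ L]
    (V : ℕ → Submodule ℝ L) (k : ℕ) : Prop :=
  ∀ P : Submodule ℝ L, P ≤ V 1 →
    Module.finrank ℝ P = Module.finrank ℝ (V 1) - k →
    commutatorSubmodule L ≤ (LieSubalgebra.lieSpan ℝ L (P : Set L)).toSubmodule

section Helpers

variable {L : Type*} [LieRing L] [LieAlgebra ℝ L]

lemma mem_bracketSpan {A B : Submodule ℝ L} {x y : L} (hx : x ∈ A) (hy : y ∈ B) :
    ⁅x, y⁆ ∈ bracketSpan A B :=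
  Submodule.subset_span ⟨x, hx, y, hy, rfl⟩

lemma bracketSpan_le {A B C : Submodule ℝ L}
    (h : ∀ x ∈ A, ∀ y ∈ B, ⁅x, y⁆ ∈ C) : bracketSpan A B ≤ C := by
  refine Submodule.span_le.mpr ?_
  rintro z ⟨x, hx, y, hy, rfl⟩
  exact h x hx y hy

lemma bracketSpan_mono {A A' B B' : Submodule ℝ L} (hA : A ≤ A') (hB : B ≤ B') :
    bracketSpan A B ≤ bracketSpan A' B' :=
  bracketSpan_le fun x hx y hy => mem_bracketSpan (hA hx) (hB hy)

lemma IsStratification.bracket_one_le {V : ℕ → Submodule ℝ L} {s : ℕ}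
    (hst : IsStratification L V s) (j : ℕ) : bracketSpan (V 1) (V j) ≤ V (j + 1) := by
  rcases Nat.lt_or_ge j 1 with h | h
  · interval_cases j
    refine bracketSpan_le fun _x _ y hy => ?_
    rw [hst.zero_eq_bot, Submodule.mem_bot] at hy
    subst hy
    simp
  rcases Nat.lt_or_ge s j with h2 | h2
  · refine bracketSpan_le fun _x _ y hy => ?_
    rw [hst.eq_bot_of_gt j h2, Submodule.mem_bot] at hy
    subst hy
    simp
  rcases Nat.lt_or_ge j s with h3 | h3
  · have := hst.bracket_eq (j + 1) (by omega) (by omega)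
    simpa using this.le
  · have hjs : j = s := le_antisymm h2 h3
    subst hjs
    rw [hst.bracket_last_eq_bot]
    exact bot_le

lemma IsStratification.bracket_le {V : ℕ → Submodule ℝ L} {s : ℕ}
    (hst : IsStratification L V s) :
    ∀ i j, bracketSpan (V i) (V j) ≤ V (i + j) := by
  intro i
  induction i using Nat.strong_induction_on with
  | _ i ih =>
    match i with
    | 0 =>
      intro j
      refine bracketSpan_le fun x hx y _ => ?_
      rw [hst.zero_eq_bot, Submodule.mem_bot] at hx
      subst hx
      simp
    | 1 =>
      intro j
      simpa [Nat.add_comm] using hst.bracket_one_le j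
    | (i + 2) =>
      intro j
      rcases Nat.lt_or_ge s (i + 2) with h | h
      · refine bracketSpan_le fun x hx y _ => ?_
        rw [hst.eq_bot_of_gt _ h, Submodule.mem_bot] at hx
        subst hx
        simp
      refine bracketSpan_le fun w hw z hz => ?_
      have heq : bracketSpan (V 1) (V (i + 1)) = V (i + 2) :=
        hst.bracket_eq (i + 2) (by omega) h
      have hw' : w ∈ bracketSpan (V 1) (V (i + 1)) := heq ▸ hw
      clear hw
      rw [bracketSpan] at hw'
      induction hw' using Submodule.span_induction with
      | mem w hwmem =>
        obtain ⟨x, hx, y, hy, rfl⟩ := hwmem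
        rw [lie_lie]
        refine sub_mem ?_ ?_
        · have h1 : ⁅y, z⁆ ∈ V (i + 1 + j) :=
            ih (i + 1) (by omega) j (mem_bracketSpan hy hz)
          have h2 : ⁅x, ⁅y, z⁆⁆ ∈ V (i + 1 + j + 1) :=
            hst.bracket_one_le _ (mem_bracketSpan hx h1)
          have he : i + 1 + j + 1 = i + 2 + j := by omega
          rwa [he] at h2
        · have h1 : ⁅x, z⁆ ∈ V (j + 1) :=
            hst.bracket_one_le _ (mem_bracketSpan hx hz)
          have h2 : ⁅y, ⁅x, z⁆⁆ ∈ V (i + 1 + (j + 1)) :=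
            ih (i + 1) (by omega) (j + 1) (mem_bracketSpan hy h1)
          have he : i + 1 + (j + 1) = i + 2 + j := by omega
          rwa [he] at h2
      | zero => simp
      | add a b _ _ ha hb => rw [add_lie]; exact add_mem ha hb
      | smul c a _ ha => rw [smul_lie]; exact Submodule.smul_mem _ c ha

lemma comm_le_of_layers {V : ℕ → Submodule ℝ L} {s : ℕ}
    (hst : IsStratification L V s) (A : Submodule ℝ L)
    (hA : ∀ i j : ℕ, bracketSpan (V (i + 1)) (V (j + 1)) ≤ A) :
    commutatorSubmodule L ≤ A := by
  have htop : (⨆ i : Fin s, V (i.1 + 1)) = ⊤ :=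
    hst.isInternal.submodule_iSup_eq_top
  refine bracketSpan_le fun x _ y _ => ?_
  have key : ∀ x ∈ (⨆ i : Fin s, V (i.1 + 1)), ∀ y ∈ (⨆ i : Fin s, V (i.1 + 1)),
      ⁅x, y⁆ ∈ A := by
    intro x hx
    refine Submodule.iSup_induction (x := x) _ hx
      (motive := fun t => ∀ y ∈ (⨆ i : Fin s, V (i.1 + 1)), ⁅t, y⁆ ∈ A) ?_ ?_ ?_
    · intro i x hxi y hy
      refine Submodule.iSup_induction (x := y) _ hy (motive := fun u => ⁅x, u⁆ ∈ A) ?_ ?_ ?_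
      · intro j u huj
        exact hA i j (mem_bracketSpan hxi huj)
      · simp
      · intro a b ha hb
        rw [lie_add]
        exact add_mem ha hb
    · intro y _
      simp
    · intro a b ha hb y hy
      rw [add_lie]
      exact add_mem (ha y hy) (hb y hy)
  exact key x (htop ▸ Submodule.mem_top) y (htop ▸ Submodule.mem_top)

/-- Elements of `A` whose bracket with every element of `W` lies in `A`. -/
def stabIn (A : LieSubalgebra ℝ L) (W : Submodule ℝ L) : LieSubalgebra ℝ L where
  carrier := {y | y ∈ A ∧ ∀ x ∈ W, ⁅x, y⁆ ∈ A}
  zero_mem' := ⟨A.zero_mem, fun x _ => by simp⟩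
  add_mem' := fun ha hb => ⟨A.add_mem ha.1 hb.1, fun x hx => by
    rw [lie_add]; exact A.add_mem (ha.2 x hx) (hb.2 x hx)⟩
  smul_mem' := fun c a ha => ⟨A.smul_mem c ha.1, fun x hx => by
    rw [lie_smul]; exact A.smul_mem c (ha.2 x hx)⟩
  lie_mem' := fun {a b} ha hb => ⟨A.lie_mem ha.1 hb.1, fun x hx => by
    rw [leibniz_lie]
    exact A.add_mem (A.lie_mem (ha.2 x hx) hb.1) (A.lie_mem ha.1 (hb.2 x hx))⟩

end Helpers

/-- A stratified real Lie algebra `𝔤 = V₁ ⊕ ⋯ ⊕ V_s` of rank `m` is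
hypergenerated of order `k` if and only if every linear subspace `P ⊆ V₁` with
`dim P = m - k` satisfies `V₂ ⊆ Lie(P)`. -/
theorem hypergenerated_iff_second_layer {L : Type*} [LieRing L] [LieAlgebra ℝ L]
    [FiniteDimensional ℝ L] (V : ℕ → Submodule ℝ L) (s m : ℕ)
    (hst : IsStratification L V s) (hm : Module.finrank ℝ (V 1) = m) (k : ℕ) :
    IsHypergenerated L V k ↔
      ∀ P : Submodule ℝ L, P ≤ V 1 → Module.finrank ℝ P = m - k →
        V 2 ≤ (LieSubalgebra.lieSpan ℝ L (P : Set L)).toSubmodule := by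
  have hV2co : V 2 ≤ commutatorSubmodule L := by
    rcases Nat.lt_or_ge s 2 with h | h
    · rw [hst.eq_bot_of_gt 2 h]
      exact bot_le
    · rw [← hst.bracket_eq 2 le_rfl h]
      exact bracketSpan_mono le_top le_top
  constructor
  · intro H P hP hdim
    exact le_trans hV2co (H P hP (by rw [hm]; exact hdim))
  · intro H P hP' hdim'
    set A := LieSubalgebra.lieSpan ℝ L (P : Set L) with hAdef
    have hV2 : V 2 ≤ A.toSubmodule := H P hP' (by rw [← hm]; exact hdim')
    -- every element of `A` is stable under bracketing with `V 1`
    have hstab : A ≤ stabIn A (V 1) := by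
      rw [hAdef]
      refine LieSubalgebra.lieSpan_le.mpr ?_
      intro p hp
      refine ⟨LieSubalgebra.subset_lieSpan hp, fun x hx => ?_⟩
      have h2 : ⁅x, p⁆ ∈ V 2 := hst.bracket_one_le 1 (mem_bracketSpan hx (hP' hp))
      exact hV2 h2
    have key : ∀ y ∈ A, ∀ x ∈ V 1, ⁅x, y⁆ ∈ A := fun y hy x hx => (hstab hy).2 x hx
    -- all layers `V (j+2)` are inside `A`
    have hlayer : ∀ j, V (j + 2) ≤ A.toSubmodule := by
      intro j
      induction j with
      | zero => exact hV2
      | succ n ih =>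
        rcases Nat.lt_or_ge s (n + 3) with h | h
        · rw [hst.eq_bot_of_gt _ h]
          exact bot_le
        · have heq : bracketSpan (V 1) (V (n + 2)) = V (n + 3) :=
            hst.bracket_eq (n + 3) (by omega) h
          rw [← heq]
          exact bracketSpan_le fun x hx y hy => key y (ih hy) x hx
    refine comm_le_of_layers hst A.toSubmodule fun i j => ?_
    refine le_trans (hst.bracket_le (i + 1) (j + 1)) ?_
    have he : i + 1 + (j + 1) = i + j + 2 := by omega
    rw [he]
    exact hlayer (i + j)
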